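/- Let ε > 0, 0 < p ≤ 2, and let X be a real symmetric positive semidefinite n×n matrix all of whose diagonal entries equal 1. Set G = p·X·(XᵀX + εI)^{(p−2)/2}. If 0 ≤ α ≤ ε^{(2−p)/2}/(2p), then the matrix Y obtained from X − 2αG by replacing every diagonal entry with 1 is positive semidefinite. -/

import Mathlib

open Matrix

/-- The real power of a symmetric matrix, defined spectrally: for a Hermitian matrix
`A` with eigendecomposition `A = U D U*`, `matRpow A r = U D^r U*` (junk value `0` if
`A` is not Hermitian). -/
noncomputable def matRpow {n : ℕ} (A : Matrix (Fin n) (Fin n) ℝ) (r : ℝ) :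
    Matrix (Fin n) (Fin n) ℝ :=
  if hA : A.IsHermitian then
    (hA.eigenvectorUnitary : Matrix (Fin n) (Fin n) ℝ) *
      Matrix.diagonal (fun i => hA.eigenvalues i ^ r) *
      (star (hA.eigenvectorUnitary : Matrix (Fin n) (Fin n) ℝ))
  else 0

/-- A spectrally-defined matrix function of a PSD matrix, with nonneg values on `[0,∞)`,
is PSD. -/
lemma cfc_posSemidef {n : ℕ} {X : Matrix (Fin n) (Fin n) ℝ} (hX : X.PosSemidef) (f : ℝ → ℝ)
    (hf : ∀ x, 0 ≤ x → 0 ≤ f x) : (cfc f X).PosSemidef := by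
  rw [hX.isHermitian.cfc_eq f, Matrix.IsHermitian.cfc, Unitary.conjStarAlgAut_apply,
    Matrix.star_eq_conjTranspose]
  exact (Matrix.posSemidef_diagonal_iff.mpr fun i =>
    hf _ (hX.eigenvalues_nonneg i)).mul_mul_conjTranspose_same _

set_option maxHeartbeats 1000000 in
/-- **Theorem 3.2** (smoothed Schatten `p`-norm, gradient step with diagonal reset).
Let `ε > 0`, `0 < p ≤ 2`, and let `X` be a real symmetric PSD `n×n` matrix with unit
diagonal.  Set `G = p • X * (XᵀX + εI)^((p-2)/2)`.  If `0 ≤ α ≤ ε^((2-p)/2) / (2p)`,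
then the matrix obtained from `X - 2αG` by resetting every diagonal entry to `1` is
positive semidefinite. -/
theorem gradient_step_diag_reset_psd_schatten
    {n : ℕ} (ε p α : ℝ) (hε : 0 < ε) (hp0 : 0 < p) (hp2 : p ≤ 2)
    (X : Matrix (Fin n) (Fin n) ℝ) (hX : X.PosSemidef)
    (hdiag : ∀ i, X i i = 1)
    (hα0 : 0 ≤ α) (hα : α ≤ ε ^ ((2 - p) / 2) / (2 * p)) :
    Matrix.PosSemidef (Matrix.of fun i j : Fin n =>
      if i = j then (1 : ℝ)
      else ((X - (2 * α) • (p • (X * matRpow (Xᵀ * X + ε • 1) ((p - 2) / 2)))) :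
        Matrix (Fin n) (Fin n) ℝ) i j) := by
  classical
  set r : ℝ := (p - 2) / 2 with hr
  set c : ℝ := 2 * α * p with hc
  have hc0 : 0 ≤ c := by positivity
  have hr0 : r ≤ 0 := by rw [hr]; linarith
  have hXsa : IsSelfAdjoint X := hX.isHermitian
  have hXt : Xᵀ = X := by
    rw [← X.conjTranspose_eq_transpose_of_trivial]; exact hX.isHermitian
  -- continuity facts
  have hcg : Continuous fun x : ℝ => (x ^ 2 + ε) ^ r := by
    rw [continuous_iff_continuousAt]
    intro x
    exact (Real.continuousAt_rpow_const _ r (Or.inl (by positivity))).comp (by fun_prop)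
  -- A = cfc (x² + ε) X
  have hA_eq : Xᵀ * X + ε • (1 : Matrix (Fin n) (Fin n) ℝ) =
      cfc (fun x : ℝ => x ^ 2 + ε) X := by
    have h1 := cfc_add (a := X) (fun x : ℝ => x ^ 2) (fun _ : ℝ => ε) (by fun_prop) (by fun_prop)
    rw [h1, cfc_pow_id X 2, cfc_const ε X, Algebra.algebraMap_eq_smul_one, hXt, sq]
  have hAH : (Xᵀ * X + ε • (1 : Matrix (Fin n) (Fin n) ℝ)).IsHermitian := by
    rw [hA_eq]
    exact cfc_predicate _ X
  -- matRpow = cfc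
  have hM : matRpow (Xᵀ * X + ε • 1) r = cfc (fun x : ℝ => x ^ r) (Xᵀ * X + ε • 1) := by
    rw [matRpow, dif_pos hAH, hAH.cfc_eq, Matrix.IsHermitian.cfc]
    norm_num [Function.comp_def]
  have hcomp : cfc (fun x : ℝ => x ^ r) (Xᵀ * X + ε • 1) =
      cfc (fun x : ℝ => (x ^ 2 + ε) ^ r) X := by
    rw [hA_eq, ← cfc_comp' (fun x : ℝ => x ^ r) (fun x : ℝ => x ^ 2 + ε) X
      (fun y hy => by
        obtain ⟨x, -, rfl⟩ := hy
        exact (Real.continuousAt_rpow_const _ r (Or.inl (by positivity))).continuousWithinAt)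
      (by fun_prop)]
  have hXM : X * matRpow (Xᵀ * X + ε • 1) r =
      cfc (fun x : ℝ => x * (x ^ 2 + ε) ^ r) X := by
    rw [hM, hcomp,
      cfc_mul (fun x : ℝ => x) (fun x : ℝ => (x ^ 2 + ε) ^ r) X (by fun_prop) hcg.continuousOn,
      cfc_id' ℝ (a := X)]
  set M := matRpow (Xᵀ * X + ε • 1) r with hMdef
  -- the gradient-step matrix as a spectral function of X
  have hB : X - (2 * α) • (p • (X * M)) =
      cfc (fun x : ℝ => x - c * (x * (x ^ 2 + ε) ^ r)) X := by
    rw [cfc_sub (fun x : ℝ => x) (fun x : ℝ => c * (x * (x ^ 2 + ε) ^ r)) X (by fun_prop)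
        (by fun_prop),
      cfc_const_mul c (fun x : ℝ => x * (x ^ 2 + ε) ^ r) X (by fun_prop),
      cfc_id' ℝ (a := X), ← hXM, smul_smul, hc]
  -- scalar bound
  have hce : c * ε ^ r ≤ 1 := by
    have h1 : c ≤ ε ^ (-r) := by
      have h2 : ε ^ ((2 - p) / 2) = ε ^ (-r) := by rw [hr]; ring_nf
      calc c = 2 * p * α := by rw [hc]; ring
        _ ≤ 2 * p * (ε ^ ((2 - p) / 2) / (2 * p)) :=
            mul_le_mul_of_nonneg_left hα (by positivity)
        _ = ε ^ ((2 - p) / 2) := by field_simp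
        _ = ε ^ (-r) := h2
    calc c * ε ^ r ≤ ε ^ (-r) * ε ^ r :=
          mul_le_mul_of_nonneg_right h1 (Real.rpow_nonneg hε.le r)
      _ = 1 := by rw [← Real.rpow_add hε]; simp
  have hF : ∀ x : ℝ, 0 ≤ x → 0 ≤ x - c * (x * (x ^ 2 + ε) ^ r) := by
    intro x hx
    have h2 : (x ^ 2 + ε) ^ r ≤ ε ^ r :=
      Real.rpow_le_rpow_of_nonpos hε (by nlinarith) hr0
    have h3 : c * (x ^ 2 + ε) ^ r ≤ 1 :=
      le_trans (mul_le_mul_of_nonneg_left h2 hc0) hce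
    have h4 : 0 ≤ (x ^ 2 + ε) ^ r := Real.rpow_nonneg (by positivity) r
    nlinarith
  have hBpsd : (X - (2 * α) • (p • (X * M))).PosSemidef := by
    rw [hB]; exact cfc_posSemidef hX _ hF
  have hXMpsd : (X * M).PosSemidef := by
    rw [hXM]
    exact cfc_posSemidef hX _ fun x hx =>
      mul_nonneg hx (Real.rpow_nonneg (by positivity) r)
  have hXMd : ∀ i, 0 ≤ (X * M) i i := fun i => hXMpsd.diag_nonneg
  -- assemble
  have hY : (Matrix.of fun i j : Fin n =>
      if i = j then (1 : ℝ)
      else (X - (2 * α) • (p • (X * M))) i j) =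
      (X - (2 * α) • (p • (X * M))) + Matrix.diagonal (fun i => c * (X * M) i i) := by
    ext i j
    by_cases h : i = j
    · subst h
      simp [Matrix.sub_apply, Matrix.smul_apply, hdiag i, smul_eq_mul, hc]
      ring
    · simp [h, Matrix.diagonal_apply_ne _ h]
  rw [hY]
  exact hBpsd.add (Matrix.PosSemidef.diagonal fun i => mul_nonneg hc0 (hXMd i))
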